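/- arXiv:0706.3028 — 2 statements merged into one kernel-verified Lean document; each statement's English description precedes it below -/
import Mathlib

section
/- Let R be a Noetherian regular local ring of prime characteristic p > 0 satisfying condition (*), and let a be an ideal of R. Then the set of F-jumping coefficients of a is a closed subset of ℝ. -/
/-- The `q`-th bracket power of an ideal: the ideal generated by the `q`-th powers
of the elements of `J`. -/
def bracketPow {R : Type*} [CommRing R] (J : Ideal R) (q : ℕ) : Ideal R :=
  Ideal.span ((fun x => x ^ q) '' (J : Set R))

/-- `Ie p a e` is the intersection of all ideals `I` with `a ⊆ I^{[p^e]}`. -/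
def Ie {R : Type*} [CommRing R] (p : ℕ) (a : Ideal R) (e : ℕ) : Ideal R :=
  sInf {I : Ideal R | a ≤ bracketPow I (p ^ e)}

/-- Condition (*): `a ⊆ I_e(a)^{[p^e]}` for every ideal `a` and every `e ≥ 1`. -/
def CondStar (R : Type*) [CommRing R] (p : ℕ) : Prop :=
  ∀ (a : Ideal R) (e : ℕ), 1 ≤ e → a ≤ bracketPow (Ie p a e) (p ^ e)

/-- The generalized test ideal `τ(a^c)`: the supremum, in the lattice of ideals of `R`,
of the ideals `I_e(a^{⌈c p^e⌉})` for `e ≥ 1`. -/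
noncomputable def tau {R : Type*} [CommRing R] (p : ℕ) (a : Ideal R) (c : ℝ) : Ideal R :=
  ⨆ e : {e : ℕ // 1 ≤ e}, Ie p (a ^ ⌈c * (p : ℝ) ^ (e : ℕ)⌉₊) (e : ℕ)

/-- `c > 0` is an F-jumping coefficient of `a` if `τ(a^c) ≠ τ(a^{c-ε})` for all
`0 < ε < c`. -/
def IsFJumpingCoeff {R : Type*} [CommRing R] (p : ℕ) (a : Ideal R) (c : ℝ) : Prop :=
  0 < c ∧ ∀ ε : ℝ, 0 < ε → ε < c → tau p a c ≠ tau p a (c - ε)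

/-- `x` is an accumulation point of `S ⊆ ℝ`. -/
def IsAccumulationPt (S : Set ℝ) (x : ℝ) : Prop :=
  ∀ ε : ℝ, 0 < ε → ∃ y ∈ S, y ≠ x ∧ |y - x| < ε

/-- `R` is a regular local ring: Noetherian, local, and the maximal ideal is generated
by `dim R` elements. -/
def IsRegularStmt (R : Type*) [CommRing R] [IsLocalRing R] : Prop :=
  ∃ s : Finset R, IsLocalRing.maximalIdeal R = Ideal.span (s : Set R) ∧
    (s.card : WithBot (WithTop ℕ)) = ringKrullDim R

lemma Ie_mono {R : Type*} [CommRing R] (p : ℕ) {b b' : Ideal R} (e : ℕ) (h : b ≤ b') :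
    Ie p b e ≤ Ie p b' e :=
  sInf_le_sInf (fun _ hI => le_trans h hI)

lemma tau_anti {R : Type*} [CommRing R] (p : ℕ) (a : Ideal R) : Antitone (tau p a) := by
  intro c c' h
  apply iSup_mono
  intro e
  apply Ie_mono
  apply Ideal.pow_le_pow_right
  apply Nat.ceil_le_ceil
  have : (0:ℝ) ≤ (p : ℝ) ^ (e : ℕ) := by positivity
  nlinarith

lemma jump_ne {R : Type*} [CommRing R] {p : ℕ} {a : Ideal R} {d t : ℝ}
    (hd : IsFJumpingCoeff p a d) (h1 : 0 < t) (h2 : t < d) :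
    tau p a t ≠ tau p a d := by
  have := hd.2 (d - t) (by linarith) (by linarith)
  have ht : d - (d - t) = t := by ring
  rw [ht] at this
  exact fun h => this h.symm


theorem stmt2_aux {R : Type*} [CommRing R] [IsNoetherianRing R]
    (p : ℕ) (a : Ideal R) :
    IsClosed {c : ℝ | IsFJumpingCoeff p a c} := by
  set S := {c : ℝ | IsFJumpingCoeff p a c} with hS
  have hanti : Antitone (tau p a) := tau_anti p a
  apply isClosed_of_closure_subset
  intro c hc
  by_contra hcS
  by_cases hA : ∀ ε : ℝ, 0 < ε → ∃ d, IsFJumpingCoeff p a d ∧ c < d ∧ d < c + ε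
  · -- accumulation from above: strictly ascending chain of ideals, contradiction
    have step : ∀ d : ℝ, c < d → ∃ d', (IsFJumpingCoeff p a d' ∧ c < d') ∧ d' < d := by
      intro d hd
      obtain ⟨d', h1, h2, h3⟩ := hA (d - c) (by linarith)
      exact ⟨d', ⟨h1, h2⟩, by linarith⟩
    obtain ⟨d0, hd01, hd02, _⟩ := hA 1 one_pos
    let T := {d : ℝ // IsFJumpingCoeff p a d ∧ c < d}
    have f : ∀ y : T, ∃ z : T, (z : ℝ) < (y : ℝ) := by
      rintro ⟨d, h1, h2⟩
      obtain ⟨d', h', hlt⟩ := step d h2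
      exact ⟨⟨d', h'⟩, hlt⟩
    choose g hg using f
    let x : ℕ → T := fun n => g^[n] ⟨d0, hd01, hd02⟩
    have hx : ∀ n, ((x (n+1) : ℝ)) < (x n : ℝ) := by
      intro n
      have : x (n+1) = g (x n) := Function.iterate_succ_apply' g n _
      rw [this]
      exact hg (x n)
    have hxanti : ∀ n m : ℕ, n ≤ m → (x m : ℝ) ≤ (x n : ℝ) := by
      intro n m hnm
      induction m with
      | zero => simp_all
      | succ k ih =>
        rcases Nat.lt_or_ge n (k+1) with h | h
        · exact le_trans (hx k).le (ih (Nat.lt_succ_iff.mp h))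
        · have : n = k + 1 := le_antisymm hnm h
          simp [this]
    let F : ℕ →o Ideal R := ⟨fun n => tau p a (x n : ℝ),
      fun n m hnm => hanti (hxanti n m hnm)⟩
    obtain ⟨n, hn⟩ := monotone_stabilizes_iff_noetherian.mpr
      (inferInstance : IsNoetherian R R) F
    have h1 : F n = F (n+1) := hn (n+1) (Nat.le_succ n)
    have h2 : tau p a ((x (n+1) : ℝ)) ≠ tau p a ((x n : ℝ)) :=
      jump_ne (x n).2.1 (x (n+1)).2.1.1 (hx n)
    exact h2 h1.symm
  · -- no accumulation from above: accumulation from below, so c ∈ S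
    push_neg at hA
    obtain ⟨ε0, hε0, hA⟩ := hA
    have hBelow : ∀ ε : ℝ, 0 < ε → ∃ d, IsFJumpingCoeff p a d ∧ c - ε < d ∧ d < c := by
      intro ε hε
      have hmin : (0:ℝ) < min ε ε0 := lt_min hε hε0
      obtain ⟨d, hdS, hdd⟩ := Metric.mem_closure_iff.mp hc (min ε ε0) hmin
      have habs : |c - d| < min ε ε0 := hdd
      rw [abs_lt] at habs
      have hne : d ≠ c := fun h => hcS (h ▸ hdS)
      have hnotgt : ¬ (c < d) := by
        intro hgt
        have := hA d hdS hgt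
        have := habs.1
        have := min_le_right ε ε0
        linarith
      have hlt : d < c := lt_of_le_of_ne (not_lt.mp hnotgt) hne
      refine ⟨d, hdS, ?_, hlt⟩
      have := habs.2
      have := min_le_left ε ε0
      linarith
    -- show c ∈ S
    apply hcS
    obtain ⟨d1, hd1S, _, hd1lt⟩ := hBelow 1 one_pos
    have hcpos : 0 < c := lt_trans hd1S.1 hd1lt
    refine ⟨hcpos, ?_⟩
    intro ε hε hεc hne
    -- hne : tau c = tau (c - ε); tau constant on [c-ε, c]
    have hconst : ∀ t : ℝ, c - ε ≤ t → t ≤ c → tau p a t = tau p a c := by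
      intro t h1 h2
      refine le_antisymm ?_ (hanti h2)
      calc tau p a t ≤ tau p a (c - ε) := hanti h1
        _ = tau p a c := hne ▸ rfl
    obtain ⟨d, hdS, hdgt, hdlt⟩ := hBelow ε hε
    have hdpos : 0 < d := hdS.1
    set t := max (c - ε) (d / 2) with ht
    have htpos : 0 < t := lt_of_lt_of_le (by linarith : (0:ℝ) < d / 2) (le_max_right _ _)
    have htd : t < d := max_lt (by linarith) (by linarith)
    have h1 : tau p a t = tau p a c :=
      hconst t (le_max_left _ _) (max_le (by linarith) (by linarith))
    have h2 : tau p a d = tau p a c := hconst d (by linarith) (by linarith)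
    exact jump_ne hdS htpos htd (h1.trans h2.symm)


/-- The set of F-jumping coefficients of an ideal is closed in `ℝ`. -/
theorem stmt2 {R : Type*} [CommRing R] [IsNoetherianRing R] [IsLocalRing R]
    (p : ℕ) (hp : p.Prime) [CharP R p]
    (hreg : IsRegularStmt R) (hstar : CondStar R p) (a : Ideal R) :
    IsClosed {c : ℝ | IsFJumpingCoeff p a c} :=
  stmt2_aux p a
end

section
/- Let p ≥ 2 be an integer, let m be a positive integer, and let C ⊆ [0, m] be a set consisting only of irrational numbers and satisfying: (a) for every c ∈ C there exists ε > 0 such that the open interval (c, c + ε) is disjoint from C; (b) C is closed in [0, m]; (c) for every c ∈ C and every integer e ≥ 1, the modulo-m part {p^e c} belongs to C. Then C is empty. -/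
/-- The modulo-`m` part of a real number `s`: `{s} = s - m⌊s/m⌋ ∈ [0, m)`. -/
noncomputable def modPart (m : ℕ) (s : ℝ) : ℝ := s - m * ⌊s / m⌋

/-- A set `C ⊆ [0, m]` of irrational numbers satisfying conditions (a), (b), (c)
is empty. -/
theorem stmt8 (p m : ℕ) (hp : 2 ≤ p) (hm : 1 ≤ m) (C : Set ℝ)
    (hsub : C ⊆ Set.Icc (0 : ℝ) (m : ℝ))
    (hirr : ∀ c ∈ C, Irrational c)
    (ha : ∀ c ∈ C, ∃ ε : ℝ, 0 < ε ∧ Set.Ioo c (c + ε) ∩ C = ∅)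
    (hb : IsClosed C)
    (hc : ∀ c ∈ C, ∀ e : ℕ, 1 ≤ e → modPart m ((p : ℝ) ^ e * c) ∈ C) :
    C = ∅ := by
  classical
  by_contra hne
  have hCne : C.Nonempty := Set.nonempty_iff_ne_empty.mpr hne
  have hmpos : (0:ℝ) < m := by exact_mod_cast hm
  have hppos : (0:ℝ) < p := by positivity
  set T : ℝ → ℝ := fun x => modPart m ((p : ℝ) * x) with hTdef
  -- T maps C to C
  have hTC : ∀ x ∈ C, T x ∈ C := by
    intro x hx
    have := hc x hx 1 le_rfl
    simpa [pow_one] using this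
  -- basic: if a irrational, T is "affine" near a and expands by p
  -- the family for Zorn
  set S : Set (Set ℝ) :=
    {X | X ⊆ C ∧ X.Nonempty ∧ IsClosed X ∧ ∀ x ∈ X, T x ∈ X} with hSdef
  have hCS : C ∈ S := ⟨Set.Subset.rfl, hCne, hb, hTC⟩
  -- chains have lower bounds
  have hZ : ∀ c ⊆ S, IsChain (· ⊆ ·) c → c.Nonempty → ∃ lb ∈ S, ∀ s ∈ c, lb ⊆ s := by
    intro c hcS hchain hcne
    refine ⟨⋂₀ c, ?_, fun s hs => Set.sInter_subset_of_mem hs⟩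
    obtain ⟨s0, hs0⟩ := hcne
    have hmem : ∀ s ∈ c, s ⊆ C ∧ s.Nonempty ∧ IsClosed s ∧ ∀ x ∈ s, T x ∈ s :=
      fun s hs => hcS hs
    refine ⟨(Set.sInter_subset_of_mem hs0).trans (hmem s0 hs0).1, ?_, ?_, ?_⟩
    · -- nonempty via Cantor intersection
      have : Nonempty c := ⟨⟨s0, hs0⟩⟩
      apply IsCompact.nonempty_sInter_of_directed_nonempty_isCompact_isClosed
      · intro a ha b hb
        rcases hchain.total ha hb with h | h
        · exact ⟨a, ha, le_refl _, h⟩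
        · exact ⟨b, hb, h, le_refl _⟩
      · exact fun U hU => (hmem U hU).2.1
      · intro U hU
        exact (isCompact_Icc).of_isClosed_subset (hmem U hU).2.2.1
          ((hmem U hU).1.trans hsub)
      · exact fun U hU => (hmem U hU).2.2.1
    · exact isClosed_sInter fun U hU => (hmem U hU).2.2.1
    · intro x hx
      rw [Set.mem_sInter] at hx ⊢
      exact fun U hU => (hmem U hU).2.2.2 x (hx U hU)
  -- Zorn for minimal element
  obtain ⟨X, -, hXmin⟩ := zorn_superset_nonempty S hZ C hCS
  obtain ⟨hXC, hXne, hXcl, hXT⟩ := hXmin.prop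
  have hXIcc : X ⊆ Set.Icc (0:ℝ) m := hXC.trans hsub
  have hXcp : IsCompact X := (isCompact_Icc).of_isClosed_subset hXcl hXIcc
  -- orbit of a point of X is infinite
  obtain ⟨x0, hx0⟩ := hXne
  set o : ℕ → ℝ := fun e => T^[e] x0 with hodef
  have hoX : ∀ e, o e ∈ X := by
    intro e
    induction e with
    | zero => simpa [hodef] using hx0
    | succ n ih =>
      have : o (n+1) = T (o n) := Function.iterate_succ_apply' T n x0
      rw [this]; exact hXT _ ih
  have hrep : ∀ e, ∃ N : ℤ, o e = (p:ℝ)^e * x0 - m * N := by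
    intro e
    induction e with
    | zero => exact ⟨0, by simp [hodef]⟩
    | succ n ih =>
      obtain ⟨N, hN⟩ := ih
      refine ⟨p * N + ⌊(p:ℝ) * o n / m⌋, ?_⟩
      have h1 : o (n+1) = T (o n) := Function.iterate_succ_apply' T n x0
      rw [h1]
      show (p:ℝ) * o n - m * ⌊(p:ℝ) * o n / m⌋ = _
      rw [hN]
      push_cast
      ring
  have hirrx0 : Irrational x0 := hirr x0 (hXC hx0)
  have hkey0 : ∀ e1 e2 : ℕ, e1 < e2 → o e1 = o e2 → False := by
    intro e1 e2 hlt h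
    obtain ⟨N1, h1⟩ := hrep e1
    obtain ⟨N2, h2⟩ := hrep e2
    have hkey : ((p:ℝ)^e2 - (p:ℝ)^e1) * x0 = (m:ℝ) * (N2 - N1) := by
      have := h1.symm.trans (h ▸ h2.symm).symm
      -- h1 : o e1 = ..., h2 : o e2 = ..., o e1 = o e2
      have heq : (p:ℝ)^e1 * x0 - m * N1 = (p:ℝ)^e2 * x0 - m * N2 := by
        rw [← h1, ← h2, h]
      linarith [heq]
    have hd : ((p:ℤ)^e2 - (p:ℤ)^e1) ≠ 0 := by
      have : (p:ℤ)^e1 < (p:ℤ)^e2 := by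
        apply pow_lt_pow_right₀ (by exact_mod_cast hp.trans_lt' one_lt_two) hlt
      omega
    have hirr2 : Irrational ((((p:ℤ)^e2 - (p:ℤ)^e1) : ℤ) * x0) :=
      hirrx0.intCast_mul hd
    apply hirr2.ne_int ((m:ℤ) * (N2 - N1))
    push_cast
    push_cast at hkey
    linarith [hkey]
  have hoInj : Function.Injective o := by
    intro e1 e2 h
    rcases lt_trichotomy e1 e2 with hlt | heq | hgt
    · exact absurd (hkey0 e1 e2 hlt h) not_false
    · exact heq
    · exact absurd (hkey0 e2 e1 hgt h.symm) not_false
  have hXinf : X.Infinite := Set.infinite_of_injective_forall_mem hoInj hoX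
  -- derived set
  have hDne : (derivedSet X).Nonempty := by
    obtain ⟨x, hxX, hacc⟩ := hXinf.exists_accPt_of_subset_isCompact hXcp Set.Subset.rfl
    exact ⟨x, hacc⟩
  have hDsub : derivedSet X ⊆ X := by
    intro x hx
    have := derivedSet_subset_closure X hx
    rwa [hXcl.closure_eq] at this
  -- T-stability of the derived set
  have hDT : ∀ a ∈ derivedSet X, T a ∈ derivedSet X := by
    intro a haD
    have haX : a ∈ X := hDsub haD
    have haIrr : Irrational a := hirr a (hXC haX)
    rw [mem_derivedSet, accPt_iff_nhds] at haD ⊢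
    intro U hU
    obtain ⟨δ, hδpos, hδ⟩ := Metric.mem_nhds_iff.mp hU
    set K : ℤ := ⌊(p:ℝ) * a / m⌋ with hK
    have hfl : (K:ℝ) ≤ (p:ℝ) * a / m := Int.floor_le _
    have hfu : (p:ℝ) * a / m < K + 1 := Int.lt_floor_add_one _
    have hlow : (m:ℝ) * K < (p:ℝ) * a := by
      have h1 : (K:ℝ) * m ≤ (p:ℝ) * a := (le_div_iff₀ hmpos).mp hfl
      rcases lt_or_eq_of_le h1 with h | h
      · linarith [h]
      · exfalso
        have : Irrational ((p:ℤ) * a) := haIrr.intCast_mul (by exact_mod_cast (by omega : p ≠ 0))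
        apply this.ne_int ((m:ℤ) * K)
        push_cast
        push_cast at h
        linarith
    have hhigh : (p:ℝ) * a < m * (K + 1) := by
      have := (div_lt_iff₀ hmpos).mp hfu
      linarith [this]
    -- choose η
    set η : ℝ := min (δ / p) (min (((p:ℝ) * a - m * K) / p) ((m * (K+1) - (p:ℝ) * a) / p)) with hη
    have hηpos : 0 < η := by
      refine lt_min (by positivity) (lt_min (div_pos ?_ hppos) (div_pos ?_ hppos)) <;> linarith
    obtain ⟨y, ⟨hyball, hyX⟩, hyne⟩ := haD (Metric.ball a η) (Metric.ball_mem_nhds a hηpos)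
    have hdist : |y - a| < η := by
      rw [Metric.mem_ball, Real.dist_eq] at hyball; exact hyball
    have hdist' : |(p:ℝ) * y - (p:ℝ) * a| < p * η := by
      rw [← mul_sub, abs_mul, abs_of_pos hppos]
      exact (mul_lt_mul_iff_right₀ hppos).mpr hdist
  -- floor (p y / m) = K
    have hbound1 : p * η ≤ (p:ℝ) * a - m * K := by
      have : η ≤ ((p:ℝ) * a - m * K) / p := (min_le_right _ _).trans (min_le_left _ _)
      calc (p:ℝ) * η ≤ p * (((p:ℝ) * a - m * K) / p) := by
            exact (mul_le_mul_iff_right₀ hppos).mpr this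
        _ = (p:ℝ) * a - m * K := by field_simp
    have hbound2 : p * η ≤ m * (K+1) - (p:ℝ) * a := by
      have : η ≤ (m * (K+1) - (p:ℝ) * a) / p := (min_le_right _ _).trans (min_le_right _ _)
      calc (p:ℝ) * η ≤ p * ((m * (K+1) - (p:ℝ) * a) / p) := by
            exact (mul_le_mul_iff_right₀ hppos).mpr this
        _ = m * (K+1) - (p:ℝ) * a := by field_simp
    have habs := abs_lt.mp hdist'
    have hyl : (m:ℝ) * K < (p:ℝ) * y := by linarith [habs.1]
    have hyh : (p:ℝ) * y < m * (K+1) := by linarith [habs.2]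
    have hfly : ⌊(p:ℝ) * y / m⌋ = K := by
      rw [Int.floor_eq_iff]
      constructor
      · rw [le_div_iff₀ hmpos]; linarith
      · rw [div_lt_iff₀ hmpos]; push_cast; linarith
    have hTy : T y = (p:ℝ) * y - m * K := by
      show modPart m ((p:ℝ) * y) = _
      rw [modPart, hfly]
    have hTa : T a = (p:ℝ) * a - m * K := by
      show modPart m ((p:ℝ) * a) = _
      rw [modPart, ← hK]
    refine ⟨T y, ⟨?_, hXT y hyX⟩, ?_⟩
    · apply hδ
      rw [Metric.mem_ball, Real.dist_eq, hTy, hTa]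
      have : |(p:ℝ) * y - m * K - ((p:ℝ) * a - m * K)| = |(p:ℝ)*y - (p:ℝ)*a| := by
        ring_nf
      rw [this]
      calc |(p:ℝ)*y - (p:ℝ)*a| < p * η := hdist'
        _ ≤ p * (δ / p) := by
            exact (mul_le_mul_iff_right₀ hppos).mpr (min_le_left _ _)
        _ = δ := by field_simp
    · rw [hTy, hTa]
      intro hcon
      apply hyne
      have : (p:ℝ) * y = (p:ℝ) * a := by linarith [hcon]
      exact mul_left_cancel₀ (ne_of_gt hppos) this
  -- derived set is in S
  have hDS : derivedSet X ∈ S :=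
    ⟨hDsub.trans hXC, hDne, isClosed_derivedSet X, hDT⟩
  have hXD : X ⊆ derivedSet X := hXmin.2 hDS hDsub
  -- conclude: inf of X is accumulated from the right
  have hbdd : BddBelow X := ⟨0, fun x hx => (hXIcc hx).1⟩
  have hinfX : sInf X ∈ X := hXcl.csInf_mem ⟨x0, hx0⟩ hbdd
  obtain ⟨ε, hεpos, hεdisj⟩ := ha (sInf X) (hXC hinfX)
  have hiD : sInf X ∈ derivedSet X := hXD hinfX
  rw [mem_derivedSet, accPt_iff_nhds] at hiD
  obtain ⟨y, ⟨hyb, hyX⟩, hyne⟩ :=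
    hiD (Metric.ball (sInf X) ε) (Metric.ball_mem_nhds _ hεpos)
  have hyge : sInf X ≤ y := csInf_le hbdd hyX
  have hygt : sInf X < y := lt_of_le_of_ne hyge (Ne.symm hyne)
  have hylt : y < sInf X + ε := by
    rw [Metric.mem_ball, Real.dist_eq] at hyb
    have := (abs_lt.mp hyb).2
    linarith
  have : y ∈ Set.Ioo (sInf X) (sInf X + ε) ∩ C := ⟨⟨hygt, hylt⟩, hXC hyX⟩
  rw [hεdisj] at this
  exact this
end
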